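/- Let n ≥ 1, let U ⊆ ℝⁿ be an open set, and let f : ℝⁿ → ℝ be a C^∞ function such that at every point x ∈ U the formal Taylor series of f at x is not identically zero, i.e. for every x ∈ U there exists k ≥ 0 such that the k-th iterated derivative of f at x is nonzero. Then the zero set {x ∈ U : f(x) = 0} has Lebesgue measure zero in ℝⁿ. -/

import Mathlib

open MeasureTheory Metric

/-- If a smooth function on Euclidean space has positive `i`-th partial derivative at `x`,
then its zero set in a small closed ball around `x` is Lebesgue null. -/
lemma slice_null {m : ℕ} (g : EuclideanSpace ℝ (Fin (m + 1)) → ℝ)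
    (hg : ContDiff ℝ (⊤ : ℕ∞) g) (x : EuclideanSpace ℝ (Fin (m + 1))) (i : Fin (m + 1))
    (hpos : 0 < fderiv ℝ g x (EuclideanSpace.single i 1)) :
    ∃ r > 0, volume {y ∈ closedBall x r | g y = 0} = 0 := by
  set v : EuclideanSpace ℝ (Fin (m + 1)) := EuclideanSpace.single i 1 with hv
  have hcont : Continuous fun y => fderiv ℝ g y v :=
    (hg.continuous_fderiv (by simp)).clm_apply continuous_const
  set c : ℝ := fderiv ℝ g x v with hc
  have hopen : IsOpen {y | c / 2 < fderiv ℝ g y v} := isOpen_lt continuous_const hcont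
  obtain ⟨δ, hδ, hball⟩ := Metric.isOpen_iff.1 hopen x (by exact half_lt_self hpos)
  refine ⟨δ / 2, half_pos hδ, ?_⟩
  have hsub : closedBall x (δ / 2) ⊆ ball x δ := closedBall_subset_ball (half_lt_self hδ)
  have hder : ∀ y ∈ closedBall x (δ / 2), 0 < fderiv ℝ g y v := fun y hy =>
    lt_trans (half_pos hpos) (hball (hsub hy))
  set r : ℝ := δ / 2
  set S : Set (EuclideanSpace ℝ (Fin (m + 1))) := {y ∈ closedBall x r | g y = 0} with hS
  have hSclosed : IsClosed S := by
    have : S = closedBall x r ∩ {y | g y = 0} := by ext y; simp [hS, Set.mem_setOf_eq]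
    rw [this]
    exact isClosed_closedBall.inter (isClosed_eq hg.continuous continuous_const)
  have hSm : MeasurableSet S := hSclosed.measurableSet
  -- transfer to a product space
  set e1 := (MeasurableEquiv.toLp 2 (Fin (m + 1) → ℝ)).symm
  set e2 := MeasurableEquiv.piFinSuccAbove (fun _ : Fin (m + 1) => ℝ) i
  set S₁ : Set (Fin (m + 1) → ℝ) := e1.symm ⁻¹' S with hS₁
  set S₂ : Set (ℝ × (Fin m → ℝ)) := e2.symm ⁻¹' S₁ with hS₂
  set S₃ : Set ((Fin m → ℝ) × ℝ) := Prod.swap ⁻¹' S₂ with hS₃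
  have hS₁m : MeasurableSet S₁ := e1.symm.measurable hSm
  have hS₂m : MeasurableSet S₂ := e2.symm.measurable hS₁m
  have hS₃m : MeasurableSet S₃ := measurable_swap hS₂m
  have h1 : volume S₁ = volume S :=
    ((EuclideanSpace.volume_preserving_symm_measurableEquiv_toLp (Fin (m + 1))).symm e1).measure_preimage
      hSm.nullMeasurableSet
  have h2 : volume S₂ = volume S₁ :=
    ((volume_preserving_piFinSuccAbove (fun _ : Fin (m + 1) => ℝ) i).symm e2).measure_preimage
      hS₁m.nullMeasurableSet
  have h3 : volume S₃ = volume S₂ := by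
    rw [Measure.volume_eq_prod, Measure.volume_eq_prod]
    exact Measure.measurePreserving_swap.measure_preimage hS₂m.nullMeasurableSet
  -- it suffices to show the product measure of S₃ vanishes
  suffices h : volume S₃ = 0 by
    rw [← h1, ← h2, ← h3]; exact h
  rw [Measure.volume_eq_prod]
  rw [Measure.measure_prod_null hS₃m]
  refine Filter.Eventually.of_forall fun y => ?_
  have hsub' : Prod.mk y ⁻¹' S₃ ⊆
      {t : ℝ | e1.symm (Fin.insertNth i t y) ∈ S} := by
    intro t ht
    simp [hS₃, hS₂, hS₁, e2, MeasurableEquiv.piFinSuccAbove] at ht; exact ht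
  refine measure_mono_null hsub' ?_
  -- points on the line through direction `v`
  set ψ : ℝ → EuclideanSpace ℝ (Fin (m + 1)) := fun t => e1.symm (Fin.insertNth i t y) with hψ
  have hψeq : ∀ t, ψ t = ψ 0 + t • v := by
    intro t
    ext j
    by_cases hji : j = i
    · subst hji
      simp [hψ, e1, MeasurableEquiv.coe_toLp,
        PiLp.add_apply, PiLp.smul_apply, hv, EuclideanSpace.single_apply,
        Fin.insertNth_apply_same]
    · obtain ⟨j', rfl⟩ := Fin.exists_succAbove_eq (Ne.symm (Ne.symm hji))
      simp [hψ, e1, MeasurableEquiv.coe_toLp,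
        PiLp.add_apply, PiLp.smul_apply, hv, EuclideanSpace.single_apply,
        Fin.insertNth_apply_succAbove, Fin.succAbove_ne]
  -- the slice is subsingleton
  have hsubs : {t : ℝ | ψ t ∈ S}.Subsingleton := by
    set φ : ℝ → ℝ := fun t => g (ψ 0 + t • v) with hφ
    set I : Set ℝ := {t | ψ 0 + t • v ∈ closedBall x r} with hI
    have hIconv : Convex ℝ I := by
      have : I = (AffineMap.lineMap (ψ 0) (ψ 0 + v)) ⁻¹' closedBall x r := by
        ext t
        simp [hI, AffineMap.lineMap_apply, add_comm, add_sub_cancel_left]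
      rw [this]
      exact (convex_closedBall x r).affine_preimage _
    have hφd : ∀ t : ℝ, HasDerivAt φ (fderiv ℝ g (ψ 0 + t • v) v) t := by
      intro t
      have hline : HasDerivAt (fun t : ℝ => ψ 0 + t • v) v t := by
        simpa using ((hasDerivAt_id t).smul_const v).const_add (ψ 0)
      exact (hg.differentiable (by simp) _).hasFDerivAt.comp_hasDerivAt t hline
    have hmono : StrictMonoOn φ I := by
      refine strictMonoOn_of_deriv_pos hIconv
        (hg.continuous.comp (by fun_prop)).continuousOn fun t ht => ?_
      rw [(hφd t).deriv]
      have ht' : t ∈ I := interior_subset ht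
      exact hder _ ht'
    intro t₁ ht₁ t₂ ht₂
    have h₁ : t₁ ∈ I := by rw [hI, Set.mem_setOf_eq, ← hψeq]; exact ht₁.1
    have h₂ : t₂ ∈ I := by rw [hI, Set.mem_setOf_eq, ← hψeq]; exact ht₂.1
    refine hmono.injOn h₁ h₂ ?_
    have e₁ : φ t₁ = 0 := by rw [hφ]; simp only; rw [← hψeq]; exact ht₁.2
    have e₂ : φ t₂ = 0 := by rw [hφ]; simp only; rw [← hψeq]; exact ht₂.2
    rw [e₁, e₂]
  exact hsubs.measure_zero _

/-- If a smooth function has nonzero derivative at `x`, its zero set near `x` is null. -/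
lemma zero_null_of_fderiv_ne {m : ℕ} (g : EuclideanSpace ℝ (Fin (m + 1)) → ℝ)
    (hg : ContDiff ℝ (⊤ : ℕ∞) g) (x : EuclideanSpace ℝ (Fin (m + 1)))
    (hne : fderiv ℝ g x ≠ 0) :
    ∃ r > 0, volume {y ∈ closedBall x r | g y = 0} = 0 := by
  obtain ⟨i, hi⟩ : ∃ i, fderiv ℝ g x (EuclideanSpace.single i 1) ≠ 0 := by
    by_contra hcon
    push_neg at hcon
    apply hne
    apply ContinuousLinearMap.coe_injective
    apply Module.Basis.ext (EuclideanSpace.basisFun (Fin (m + 1)) ℝ).toBasis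
    intro i
    simpa [EuclideanSpace.basisFun_apply] using hcon i
  rcases hi.lt_or_gt with hneg | hpos
  · obtain ⟨r, hr, h0⟩ := slice_null (fun y => -g y) hg.neg x i (by
      rw [fderiv_fun_neg]; simpa using hneg)
    refine ⟨r, hr, ?_⟩
    convert h0 using 2
    ext y
    simp [neg_eq_zero]
  · exact slice_null g hg x i hpos

/-- if `f : ℝⁿ → ℝ` is `C^∞` and, at every point of an open set `U`, its formal
Taylor series is not identically zero, then the zero set of `f` in `U` has Lebesgue measure
zero. -/
theorem zero_set_measure_zero {n : ℕ} (hn : 1 ≤ n)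
    (U : Set (EuclideanSpace ℝ (Fin n))) (hU : IsOpen U)
    (f : EuclideanSpace ℝ (Fin n) → ℝ) (hf : ContDiff ℝ (⊤ : ℕ∞) f)
    (hx : ∀ x ∈ U, ∃ k : ℕ, iteratedFDeriv ℝ k f x ≠ 0) :
    MeasureTheory.volume {x | x ∈ U ∧ f x = 0} = 0 := by
  classical
  obtain ⟨m, rfl⟩ : ∃ m, n = m + 1 := ⟨n - 1, (Nat.succ_pred_eq_of_pos hn).symm⟩
  set A : ℕ → Set (EuclideanSpace ℝ (Fin (m + 1))) := fun j =>
    {y | iteratedFDeriv ℝ j f y = 0 ∧ fderiv ℝ (iteratedFDeriv ℝ j f) y ≠ 0} with hA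
  have hcover : {x | x ∈ U ∧ f x = 0} ⊆ ⋃ j, A j := by
    intro y hy
    obtain ⟨hyU, hyf⟩ := hy
    have hex : ∃ k : ℕ, iteratedFDeriv ℝ k f y ≠ 0 := hx y hyU
    have hspec : iteratedFDeriv ℝ (Nat.find hex) f y ≠ 0 := Nat.find_spec hex
    have hk0 : Nat.find hex ≠ 0 := by
      intro h0
      apply hspec
      rw [h0]
      have : ‖iteratedFDeriv ℝ 0 f y‖ = 0 := by rw [norm_iteratedFDeriv_zero, hyf, norm_zero]
      exact norm_eq_zero.1 this
    obtain ⟨j, hj⟩ : ∃ j, Nat.find hex = j + 1 :=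
      ⟨Nat.find hex - 1, (Nat.succ_pred_eq_of_pos (Nat.pos_of_ne_zero hk0)).symm⟩
    rw [hj] at hspec
    have hjzero : iteratedFDeriv ℝ j f y = 0 := by
      have := Nat.find_min hex (by omega : j < Nat.find hex)
      simpa using this
    refine Set.mem_iUnion.2 ⟨j, hjzero, ?_⟩
    intro hfd
    apply hspec
    rw [iteratedFDeriv_succ_eq_comp_left, Function.comp_apply, hfd]
    exact (continuousMultilinearCurryLeftEquiv ℝ
      (fun _ : Fin (j + 1) => EuclideanSpace ℝ (Fin (m + 1))) ℝ).symm.map_zero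
  refine measure_mono_null hcover (measure_iUnion_null fun j => ?_)
  refine measure_null_of_locally_null (A j) fun x hxA => ?_
  obtain ⟨hGx, hDx⟩ := hxA
  set G := iteratedFDeriv ℝ j f with hG
  obtain ⟨w, hw⟩ : ∃ w, fderiv ℝ G x w ≠ 0 := by
    by_contra hcon
    push_neg at hcon
    exact hDx (ContinuousLinearMap.ext fun w => by simpa using hcon w)
  obtain ⟨ℓ, -, hℓ⟩ := exists_dual_vector ℝ _ (norm_ne_zero_iff.2 hw)
  set g : EuclideanSpace ℝ (Fin (m + 1)) → ℝ := fun y => ℓ (G y) with hgdef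
  have hGsmooth : ContDiff ℝ (⊤ : ℕ∞) G := hf.iteratedFDeriv_right (by exact_mod_cast le_top)
  have hgsmooth : ContDiff ℝ (⊤ : ℕ∞) g := ℓ.contDiff.comp hGsmooth
  have hgfd : HasFDerivAt g (ℓ.comp (fderiv ℝ G x)) x :=
    ℓ.hasFDerivAt.comp x (hGsmooth.differentiable (by simp) x).hasFDerivAt
  have hgne : fderiv ℝ g x ≠ 0 := by
    rw [hgfd.fderiv]
    intro h0
    have : ℓ (fderiv ℝ G x w) = 0 := by
      have := congrArg (fun (L : EuclideanSpace ℝ (Fin (m + 1)) →L[ℝ] ℝ) => L w) h0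
      simpa using this
    rw [hℓ] at this
    exact hw (norm_eq_zero.1 (by exact_mod_cast this))
  obtain ⟨r, hr, hnull⟩ := zero_null_of_fderiv_ne g hgsmooth x hgne
  refine ⟨A j ∩ closedBall x r,
    Filter.inter_mem self_mem_nhdsWithin
      (mem_nhdsWithin_of_mem_nhds (closedBall_mem_nhds x hr)),
    measure_mono_null ?_ hnull⟩
  rintro y ⟨⟨hy1, -⟩, hy2⟩
  exact ⟨hy2, (congrArg ℓ hy1).trans (map_zero ℓ)⟩
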